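/- Suppose H₁ and H₂ have equal Hilbert dimension, let {b_j}_{j∈J} be an orthonormal basis of H₂, and let T ⊆ J be finite. Then the set F(T) = { v ∈ H₁ ⊗ H₂ : ‖v‖ = 1 and, writing v = Σ_j v_j ⊗ b_j with v_j ∈ H₁, the family {v_j}_{j∈T} is linearly independent } is norm dense in the unit sphere of H₁ ⊗ H₂. -/

import Mathlib

open scoped InnerProductSpace

noncomputable section

/-- The (completed) Hilbert tensor product of two complex Hilbert spaces `H₁`, `H₂`,
presented as a Hilbert space `H` together with a bilinear map `tmul` (elementary tensors)
whose inner products multiply, whose elementary tensors span a dense subspace, and together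
with the tensor product `map A B = A ⊗ B` of bounded operators. -/
structure HilbertTensor (H₁ H₂ H : Type*)
    [NormedAddCommGroup H₁] [InnerProductSpace ℂ H₁] [CompleteSpace H₁]
    [NormedAddCommGroup H₂] [InnerProductSpace ℂ H₂] [CompleteSpace H₂]
    [NormedAddCommGroup H] [InnerProductSpace ℂ H] [CompleteSpace H] where
  tmul : H₁ →ₗ[ℂ] H₂ →ₗ[ℂ] H
  inner_tmul : ∀ x₁ y₁ x₂ y₂, ⟪tmul x₁ y₁, tmul x₂ y₂⟫_ℂ = ⟪x₁, x₂⟫_ℂ * ⟪y₁, y₂⟫_ℂ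
  dense_span : Dense (↑(Submodule.span ℂ {z : H | ∃ x y, z = tmul x y}) : Set H)
  map : (H₁ →L[ℂ] H₁) → (H₂ →L[ℂ] H₂) → (H →L[ℂ] H)
  map_tmul : ∀ A B x y, map A B (tmul x y) = tmul (A x) (B y)

variable {H₁ H₂ H : Type*}
  [NormedAddCommGroup H₁] [InnerProductSpace ℂ H₁] [CompleteSpace H₁]
  [NormedAddCommGroup H₂] [InnerProductSpace ℂ H₂] [CompleteSpace H₂]
  [NormedAddCommGroup H] [InnerProductSpace ℂ H] [CompleteSpace H]

/-- `v` is cyclic for the first factor: `{(A ⊗ I) v : A bounded on H₁}` is dense in `H`. -/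
def HilbertTensor.CyclicFst (T : HilbertTensor H₁ H₂ H) (v : H) : Prop :=
  Dense (Set.range fun A : H₁ →L[ℂ] H₁ => T.map A 1 v)

/-- An orthogonal projection on a Hilbert space: a self-adjoint idempotent bounded operator. -/
def IsONProj {E : Type*} [NormedAddCommGroup E] [InnerProductSpace ℂ E] [CompleteSpace E]
    (P : E →L[ℂ] E) : Prop :=
  IsSelfAdjoint P ∧ P ∘L P = P

/-- The algebra of the second factor is maximally correlated with the algebra of the first
factor in the state `v`. -/
def HilbertTensor.MaxCorrSndFst (T : HilbertTensor H₁ H₂ H) (v : H) : Prop :=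
  ∀ P' : H₂ →L[ℂ] H₂, IsONProj P' → P' ≠ 0 → ∀ ε : ℝ, 0 < ε →
    ∃ P : H₁ →L[ℂ] H₁, IsONProj P ∧ P ≠ 0 ∧
      0 < (⟪v, T.map P 1 v⟫_ℂ).re ∧
      (1 - ε) * (⟪v, T.map P 1 v⟫_ℂ).re ≤ (⟪v, T.map P P' v⟫_ℂ).re

/-- The orthogonal projection onto the span of a vector, as an operator `E →L[ℂ] E`. -/
def projSpan {E : Type*} [NormedAddCommGroup E] [InnerProductSpace ℂ E] [CompleteSpace E]
    (w : E) : E →L[ℂ] E :=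
  (ℂ ∙ w).subtypeL ∘L (ℂ ∙ w).orthogonalProjection

set_option linter.unusedSectionVars false

set_option maxHeartbeats 1000000 in
theorem exists_perturb_li {δ : ℝ} (hδ : 0 < δ) {J : Type} (s : Finset J) :
    (s.card : Cardinal) ≤ Module.rank ℂ H₁ → ∀ f : J → H₁, ∃ g : J → H₁,
      (∀ j, j ∉ s → g j = f j) ∧ (∀ j ∈ s, ‖g j - f j‖ < δ) ∧
      LinearIndependent ℂ (fun j : s => g j.1) := by
  classical
  induction s using Finset.induction_on with
  | empty =>
    intro _ f
    exact ⟨f, fun _ _ => rfl, by simp, linearIndependent_empty_type⟩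
  | @insert j₀ s' hj ih =>
    intro hR f
    obtain ⟨g', hg'eq, hg'close, hg'li⟩ := ih
      (le_trans (by exact_mod_cast Finset.card_le_card (Finset.subset_insert j₀ s')) hR) f
    set A : Set H₁ := g' '' ↑s' with hA
    set K : Submodule ℂ H₁ := Submodule.span ℂ A with hK
    have hKfd : FiniteDimensional ℂ K :=
      FiniteDimensional.span_of_finite ℂ ((s'.finite_toSet).image g')
    have hKne : K ≠ ⊤ := by
      intro htop
      have h2 : Cardinal.mk ↑A ≤ (s'.card : Cardinal) := by
        have e : A = ↑(s'.image g') := by simp [hA]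
        simp only [e, Finset.coe_sort_coe, Cardinal.mk_coe_finset]
        exact_mod_cast Finset.card_image_le
      have h1 : Module.rank ℂ H₁ ≤ (s'.card : Cardinal) := by
        have hrk := rank_span_le (R := ℂ) A
        rw [← hK, htop] at hrk
        rw [← rank_top ℂ H₁]
        exact hrk.trans h2
      have h3 : ((insert j₀ s').card : Cardinal) ≤ (s'.card : Cardinal) := hR.trans h1
      rw [Finset.card_insert_of_notMem hj] at h3
      have := Nat.cast_le (α := Cardinal).1 h3
      omega
    have hclosed : IsClosed (K : Set H₁) := Submodule.closed_of_finiteDimensional K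
    have hdense : Dense ((K : Set H₁)ᶜ) := by
      rw [← interior_eq_empty_iff_dense_compl]
      by_contra h
      exact hKne (K.eq_top_of_nonempty_interior' (Set.nonempty_iff_ne_empty.2 h))
    obtain ⟨x, hx1, hx2⟩ := Metric.dense_iff.1 hdense (f j₀) δ hδ
    refine ⟨Function.update g' j₀ x, ?_, ?_, ?_⟩
    · intro j hjmem
      rw [Function.update_of_ne (fun (h : j = j₀) => hjmem (h ▸ Finset.mem_insert_self j₀ s')),
        hg'eq j (fun h => hjmem (Finset.mem_insert_of_mem h))]
    · intro j hjmem
      rcases Finset.mem_insert.1 hjmem with rfl | hjs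
      · rw [Function.update_self, ← dist_eq_norm]
        exact Metric.mem_ball.1 hx1
      · rw [Function.update_of_ne (fun (h : j = j₀) => hj (h ▸ hjs))]
        exact hg'close j hjs
    · have hj' : j₀ ∉ (↑s' : Set J) := by simpa using hj
      have h1 : (fun j : (↑s' : Set J) => Function.update g' j₀ x ↑j)
          = fun j : (↑s' : Set J) => g' ↑j := by
        funext j
        exact Function.update_of_ne (fun (h : (j : J) = j₀) => hj' (h ▸ j.2)) _ _
      have hli' : LinearIndependent ℂ fun j : (↑s' : Set J) => Function.update g' j₀ x ↑j := by
        rw [h1]; exact hg'li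
      have hnot : Function.update g' j₀ x j₀
          ∉ Submodule.span ℂ (Function.update g' j₀ x '' (↑s' : Set J)) := by
        have himg : Function.update g' j₀ x '' (↑s' : Set J) = A := by
          rw [hA]
          refine Set.image_congr fun j hjs => ?_
          exact Function.update_of_ne (fun (h : j = j₀) => hj' (h ▸ hjs)) _ _
        rw [Function.update_self, himg, ← hK]
        exact hx2
      have key : LinearIndependent ℂ
          fun j : ↥(insert j₀ (↑s' : Set J)) => Function.update g' j₀ x ↑j :=
        (linearIndepOn_insert (s := (↑s' : Set J)) (a := j₀)
          (f := Function.update g' j₀ x) hj').2 ⟨hli', hnot⟩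
      refine key.comp (fun j : ↥(insert j₀ s' : Finset J) =>
        ⟨j.1, Set.mem_insert_iff.2 (Finset.mem_insert.1 j.2)⟩)
        (fun p q hpq => Subtype.ext (by simpa using congrArg Subtype.val hpq))

theorem HilbertTensor.norm_tmul (T : HilbertTensor H₁ H₂ H) (x : H₁) (y : H₂) :
    ‖T.tmul x y‖ = ‖x‖ * ‖y‖ := by
  have h := T.inner_tmul x y x y
  rw [inner_self_eq_norm_sq_to_K, inner_self_eq_norm_sq_to_K, inner_self_eq_norm_sq_to_K] at h
  have h' : ‖(T.tmul x) y‖ ^ 2 = ‖x‖ ^ 2 * ‖y‖ ^ 2 := by exact_mod_cast h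
  nlinarith [norm_nonneg ((T.tmul x) y), norm_nonneg x, norm_nonneg y,
    mul_nonneg (norm_nonneg x) (norm_nonneg y)]

/-- `tmul x ·` as a continuous linear map. -/
def HilbertTensor.tmulR (T : HilbertTensor H₁ H₂ H) (x : H₁) : H₂ →L[ℂ] H :=
  LinearMap.mkContinuous (T.tmul x) ‖x‖ (fun y => by rw [T.norm_tmul])

@[simp] theorem HilbertTensor.tmulR_apply (T : HilbertTensor H₁ H₂ H) (x : H₁) (y : H₂) :
    T.tmulR x y = T.tmul x y := rfl

theorem HilbertTensor.exists_coeffs (T : HilbertTensor H₁ H₂ H) {J : Type}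
    (b : HilbertBasis J ℂ H₂) {u : H}
    (hu : u ∈ Submodule.span ℂ {z : H | ∃ x y, z = T.tmul x y}) :
    ∃ f : J → H₁, HasSum (fun j => T.tmul (f j) (b j)) u := by
  induction hu using Submodule.span_induction with
  | mem z hz =>
    obtain ⟨x, y, rfl⟩ := hz
    refine ⟨fun j => b.repr y j • x, ?_⟩
    have hs := (b.hasSum_repr y).mapL (T.tmulR x)
    simpa [map_smul] using hs
  | zero => exact ⟨0, by simpa using hasSum_zero⟩
  | add z₁ z₂ h₁ h₂ ih₁ ih₂ =>
    obtain ⟨f₁, hf₁⟩ := ih₁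
    obtain ⟨f₂, hf₂⟩ := ih₂
    exact ⟨f₁ + f₂, by simpa [map_add] using hf₁.add hf₂⟩
  | smul c z hz ih =>
    obtain ⟨f, hf⟩ := ih
    exact ⟨c • f, by simpa [map_smul] using hf.const_smul c⟩


set_option maxHeartbeats 2000000 in
/-- if `H₁` and `H₂` have equal Hilbert dimension, `b` is an orthonormal basis
of `H₂`, and `Tf` is a finite set of basis indices, then the set `F(Tf)` of unit vectors
`v = Σ_j f j ⊗ b j` whose coefficient vectors `{f j}_{j ∈ Tf}` are linearly independent is
norm dense in the unit sphere of `H₁ ⊗ H₂`. -/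
theorem FT_dense_in_unitSphere
    [TopologicalSpace.SeparableSpace H₁] [TopologicalSpace.SeparableSpace H₂]
    (h₁ : 1 < Module.rank ℂ H₁) (h₂ : 1 < Module.rank ℂ H₂)
    (T : HilbertTensor H₁ H₂ H)
    {I J : Type} (a : HilbertBasis I ℂ H₁) (b : HilbertBasis J ℂ H₂)
    (hdim : Cardinal.mk I = Cardinal.mk J) (Tf : Finset J) :
    Dense {v : Metric.sphere (0 : H) 1 | ∃ f : J → H₁,
      HasSum (fun j => T.tmul (f j) (b j)) (v : H) ∧
      LinearIndependent ℂ fun j : Tf => f j.1} := by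
  classical
  rw [Metric.dense_iff]
  intro x r hr
  have hv : ‖(x : H)‖ = 1 := by
    have := x.2
    rwa [Metric.mem_sphere, dist_zero_right] at this
  set ε : ℝ := min r 1 with hε
  have hε0 : 0 < ε := lt_min hr one_pos
  have hε1 : ε ≤ 1 := min_le_right r 1
  have hεr : ε ≤ r := min_le_left r 1
  have hε4 : 0 < ε / 4 := by positivity
  obtain ⟨u, hu_ball, hu_mem⟩ := Metric.dense_iff.1 T.dense_span (x : H) (ε / 4) hε4
  obtain ⟨f, hf⟩ := T.exists_coeffs b hu_mem
  have hcard : (Tf.card : Cardinal) ≤ Module.rank ℂ H₁ := by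
    have hI := (a.orthonormal.linearIndependent).cardinal_lift_le_rank
    have hT : (Tf.card : Cardinal) ≤ Cardinal.mk J := by
      simpa [Cardinal.mk_coe_finset] using Cardinal.mk_set_le (↑Tf : Set J)
    rw [← hdim] at hT
    have h2 := (Cardinal.lift_le.2 hT).trans hI
    simpa using h2
  set n : ℝ := (Tf.card : ℝ) with hn
  have hn0 : (0:ℝ) ≤ n := Nat.cast_nonneg _
  set δ : ℝ := ε / (4 * (n + 1)) with hδdef
  have hδ0 : 0 < δ := by positivity
  obtain ⟨g, hg_eq, hg_close, hg_li⟩ := exists_perturb_li hδ0 Tf hcard f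
  set d : H := ∑ j ∈ Tf, (T.tmul (g j) (b j) - T.tmul (f j) (b j)) with hd
  have hd_sum : HasSum (fun j => T.tmul (g j) (b j) - T.tmul (f j) (b j)) d :=
    hasSum_sum_of_ne_finset_zero (fun j hj => by rw [hg_eq j hj, sub_self])
  have hw'sum : HasSum (fun j => T.tmul (g j) (b j)) (u + d) := by
    have h := hf.add hd_sum
    have he : (fun j => T.tmul (f j) (b j) + (T.tmul (g j) (b j) - T.tmul (f j) (b j)))
        = fun j => T.tmul (g j) (b j) := by funext j; abel
    rwa [he] at h
  have hd_norm : ‖d‖ < ε / 4 := by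
    have h1 : ‖d‖ ≤ ∑ j ∈ Tf, ‖T.tmul (g j) (b j) - T.tmul (f j) (b j)‖ := norm_sum_le _ _
    have h2 : ∀ j ∈ Tf, ‖T.tmul (g j) (b j) - T.tmul (f j) (b j)‖ ≤ δ := by
      intro j hj
      have he : T.tmul (g j) (b j) - T.tmul (f j) (b j) = T.tmul (g j - f j) (b j) := by
        simp [map_sub]
      rw [he, T.norm_tmul, b.orthonormal.1 j, mul_one]
      exact (hg_close j hj).le
    have h3 : ∑ j ∈ Tf, ‖T.tmul (g j) (b j) - T.tmul (f j) (b j)‖ ≤ n * δ := by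
      have := Finset.sum_le_card_nsmul Tf _ δ h2
      simpa [hn, nsmul_eq_mul] using this
    have hmul : δ * (4 * (n + 1)) = ε := by
      rw [hδdef, div_mul_cancel₀ _ (by positivity : (4:ℝ) * (n + 1) ≠ 0)]
    have h4 : n * δ < ε / 4 := by nlinarith [hδ0, hn0]
    linarith
  set w' : H := u + d with hw'def
  have hux : ‖u - (x:H)‖ < ε / 4 := by
    have := Metric.mem_ball.1 hu_ball
    rwa [dist_eq_norm] at this
  have hw'x : ‖w' - (x:H)‖ < ε / 2 := by
    have he : w' - (x:H) = (u - (x:H)) + d := by rw [hw'def]; abel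
    rw [he]
    calc ‖(u - (x:H)) + d‖ ≤ ‖u - (x:H)‖ + ‖d‖ := norm_add_le _ _
    _ < ε / 4 + ε / 4 := by linarith
    _ = ε / 2 := by ring
  have hN : 1 - ε / 2 < ‖w'‖ := by
    have habs := abs_norm_sub_norm_le w' (x:H)
    rw [hv] at habs
    have := (abs_le.1 habs).1
    linarith
  have hNpos : 0 < ‖w'‖ := by linarith
  set c : ℂ := ((‖w'‖⁻¹ : ℝ) : ℂ) with hc
  have hc0 : c ≠ 0 := by
    rw [hc]
    exact_mod_cast inv_ne_zero (ne_of_gt hNpos)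
  set w : H := c • w' with hwdef
  have hwnorm : ‖w‖ = 1 := by
    rw [hwdef, norm_smul, hc, Complex.norm_real, Real.norm_eq_abs,
      abs_of_pos (inv_pos.2 hNpos)]
    exact inv_mul_cancel₀ (ne_of_gt hNpos)
  have hwx : ‖w - (x:H)‖ < ε := by
    have h2 : ‖w - w'‖ = |1 - ‖w'‖| := by
      have he1 : w - w' = (((‖w'‖⁻¹ - 1 : ℝ)) : ℂ) • w' := by
        rw [hwdef, hc]
        push_cast
        rw [sub_smul, one_smul]
      have key : ∀ N : ℝ, 0 < N → |N⁻¹ - 1| * N = |1 - N| := by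
        intro N hN
        calc |N⁻¹ - 1| * N = |N⁻¹ - 1| * |N| := by rw [abs_of_pos hN]
        _ = |(N⁻¹ - 1) * N| := (abs_mul _ _).symm
        _ = |1 - N| := by rw [sub_mul, inv_mul_cancel₀ hN.ne', one_mul]
      rw [he1, norm_smul, Complex.norm_real, Real.norm_eq_abs]
      exact key _ hNpos
    have h3 : |1 - ‖w'‖| < ε / 2 := by
      have habs := abs_norm_sub_norm_le (x:H) w'
      rw [hv, norm_sub_rev] at habs
      linarith [habs.trans_lt hw'x]
    calc ‖w - (x:H)‖ = ‖(w - w') + (w' - (x:H))‖ := by rw [sub_add_sub_cancel]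
    _ ≤ ‖w - w'‖ + ‖w' - (x:H)‖ := norm_add_le _ _
    _ < ε / 2 + ε / 2 := by rw [h2]; linarith
    _ = ε := by ring
  refine ⟨⟨w, ?_⟩, ?_, ?_⟩
  · rw [Metric.mem_sphere, dist_zero_right]; exact hwnorm
  · rw [Metric.mem_ball, Subtype.dist_eq, dist_eq_norm]
    exact lt_of_lt_of_le hwx hεr
  · refine ⟨fun j => c • g j, ?_, ?_⟩
    · have h := hw'sum.const_smul c
      show HasSum (fun j => T.tmul (c • g j) (b j)) w
      rw [hwdef]
      simpa [map_smul] using h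
    · have hker : LinearMap.ker (c • (LinearMap.id : H₁ →ₗ[ℂ] H₁)) = ⊥ := by
        rw [LinearMap.ker_smul _ c hc0, LinearMap.ker_id]
      have h := hg_li.map' (c • (LinearMap.id : H₁ →ₗ[ℂ] H₁)) hker
      exact h

end
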